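/- Let a > 0 and let T be a positive integer. Let R₀, R₁ ∈ ℝ^{m×n} (m ≤ n) be matrices with rank(R₀) ≤ 2T and ⟨R₀, R₁⟩ = 0, where ⟨X, Y⟩ = tr(YᵀX) is the Frobenius inner product. Then ‖R₀ + R₁‖_F ≥ P_a(R₀)/(a·√(2T)). -/

import Mathlib

open Matrix Filter

/-- The singular values of a real `m × n` matrix: square roots of the eigenvalues of `X * Xᵀ`. -/
noncomputable def sv {m n : ℕ} (X : Matrix (Fin m) (Fin n) ℝ) : Fin m → ℝ :=
  fun i => Real.sqrt ((Matrix.isHermitian_mul_conjTranspose_self X).eigenvalues i)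

/-- The singular values arranged in descending order: `svSorted X 0 ≥ svSorted X 1 ≥ ⋯`. -/
noncomputable def svSorted {m n : ℕ} (X : Matrix (Fin m) (Fin n) ℝ) : Fin m → ℝ :=
  fun i => sv X (Tuple.sort (sv X) i.rev)

/-- `P_a(X) = Σᵢ a σᵢ(X)/(a σᵢ(X) + 1)`. -/
noncomputable def Pa {m n : ℕ} (a : ℝ) (X : Matrix (Fin m) (Fin n) ℝ) : ℝ :=
  ∑ i, a * sv X i / (a * sv X i + 1)

/-- Frobenius norm. -/
noncomputable def frobNorm {m n : ℕ} (X : Matrix (Fin m) (Fin n) ℝ) : ℝ :=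
  Real.sqrt (∑ i, ∑ j, (X i j) ^ 2)

/-- Nuclear norm: the sum of the singular values. -/
noncomputable def nuclearNorm {m n : ℕ} (X : Matrix (Fin m) (Fin n) ℝ) : ℝ :=
  ∑ i, sv X i

/-- The rectangular `m × n` "diagonal" matrix with diagonal entries `σ`. -/
def diagRect {m n : ℕ} (σ : Fin m → ℝ) : Matrix (Fin m) (Fin n) ℝ :=
  Matrix.of fun i j => if (j : ℕ) = (i : ℕ) then σ i else 0

/-- The `r`-restricted isometry constant `δ_r(𝒜)`. -/
noncomputable def ripConst {m n d : ℕ}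
    (A : Matrix (Fin m) (Fin n) ℝ →ₗ[ℝ] EuclideanSpace ℝ (Fin d)) (r : ℕ) : ℝ :=
  sInf {δ : ℝ | 0 ≤ δ ∧ ∀ X : Matrix (Fin m) (Fin n) ℝ, X.rank ≤ r →
    (1 - δ) * frobNorm X ^ 2 ≤ ‖A X‖ ^ 2 ∧ ‖A X‖ ^ 2 ≤ (1 + δ) * frobNorm X ^ 2}

lemma sv_nonneg {m n : ℕ} (X : Matrix (Fin m) (Fin n) ℝ) (i : Fin m) : 0 ≤ sv X i :=
  Real.sqrt_nonneg _

lemma sv_sq {m n : ℕ} (X : Matrix (Fin m) (Fin n) ℝ) (i : Fin m) :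
    sv X i ^ 2 = (Matrix.isHermitian_mul_conjTranspose_self X).eigenvalues i :=
  Real.sq_sqrt ((Matrix.posSemidef_self_mul_conjTranspose X).eigenvalues_nonneg i)

lemma trace_eq_sum_eig {k : ℕ} (A : Matrix (Fin k) (Fin k) ℝ) (hA : A.IsHermitian) :
    A.trace = ∑ i, hA.eigenvalues i := by
  conv_lhs => rw [hA.spectral_theorem]
  rw [Unitary.conjStarAlgAut_apply, Matrix.trace_mul_cycle,
    Matrix.mem_unitaryGroup_iff'.mp (hA.eigenvectorUnitary).2, Matrix.one_mul]
  simp [Matrix.trace_diagonal]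

lemma sum_sv_sq {m n : ℕ} (X : Matrix (Fin m) (Fin n) ℝ) :
    ∑ i, sv X i ^ 2 = ∑ i, ∑ j, (X i j) ^ 2 := by
  simp only [sv_sq]
  rw [← trace_eq_sum_eig _ (Matrix.isHermitian_mul_conjTranspose_self X)]
  simp [Matrix.trace, Matrix.diag, Matrix.mul_apply, Matrix.conjTranspose_apply, sq]

lemma card_sv_support_le_rank {m n : ℕ} (X : Matrix (Fin m) (Fin n) ℝ) :
    (Finset.univ.filter (fun i => sv X i ≠ 0)).card = X.rank := by
  classical
  have h1 : (X * Xᴴ).rank = X.rank := by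
    rw [Matrix.conjTranspose_eq_transpose_of_trivial, Matrix.rank_self_mul_transpose]
  have h2 := (Matrix.isHermitian_mul_conjTranspose_self X).rank_eq_card_non_zero_eigs
  rw [← h1, h2, Fintype.card_subtype]
  congr 1
  ext i
  simp only [Finset.mem_filter, Finset.mem_univ, true_and]
  have hnn := (Matrix.posSemidef_self_mul_conjTranspose X).eigenvalues_nonneg i
  constructor
  · intro h h0
    exact h (Real.sqrt_eq_zero'.mpr h0.le)
  · intro h h0
    have h' : (Matrix.isHermitian_mul_conjTranspose_self X).eigenvalues i ≤ 0 :=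
      Real.sqrt_eq_zero'.mp h0
    exact h (le_antisymm h' hnn)

theorem statement6 (m n : ℕ) (hmn : m ≤ n) (a : ℝ) (ha : 0 < a)
    (T : ℕ) (hT : 0 < T)
    (R₀ R₁ : Matrix (Fin m) (Fin n) ℝ)
    (hrank : R₀.rank ≤ 2 * T)
    (horth : Matrix.trace (R₁ᵀ * R₀) = 0) :
    frobNorm (R₀ + R₁) ≥ Pa a R₀ / (a * Real.sqrt (2 * T)) := by
  classical
  have hTpos : (0:ℝ) < 2 * T := by positivity
  have hsq : (0:ℝ) < Real.sqrt (2 * T) := Real.sqrt_pos.mpr hTpos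
  have hc : (0:ℝ) < a * Real.sqrt (2 * T) := mul_pos ha hsq
  -- Step A : frobNorm R₀ ≤ frobNorm (R₀ + R₁)
  have htr : Matrix.trace (R₁ᵀ * R₀) = ∑ i, ∑ j, R₀ i j * R₁ i j := by
    rw [Matrix.trace]
    simp only [Matrix.diag, Matrix.mul_apply, Matrix.transpose_apply]
    rw [Finset.sum_comm]
    exact Finset.sum_congr rfl fun i _ => Finset.sum_congr rfl fun j _ => mul_comm _ _
  have hA : frobNorm R₀ ≤ frobNorm (R₀ + R₁) := by
    apply Real.sqrt_le_sqrt
    have hexp : ∑ i, ∑ j, ((R₀ + R₁) i j) ^ 2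
        = (∑ i, ∑ j, (R₀ i j) ^ 2) + (∑ i, ∑ j, (R₁ i j) ^ 2)
          + 2 * ∑ i, ∑ j, R₀ i j * R₁ i j := by
      rw [Finset.mul_sum, ← Finset.sum_add_distrib, ← Finset.sum_add_distrib]
      refine Finset.sum_congr rfl fun i _ => ?_
      rw [Finset.mul_sum, ← Finset.sum_add_distrib, ← Finset.sum_add_distrib]
      refine Finset.sum_congr rfl fun j _ => ?_
      simp [Matrix.add_apply]; ring
    rw [hexp, ← htr, horth]
    have : (0:ℝ) ≤ ∑ i, ∑ j, (R₁ i j) ^ 2 := by positivity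
    linarith
  -- Step B : Pa a R₀ ≤ a * √(2T) * frobNorm R₀
  set S : Finset (Fin m) := Finset.univ.filter (fun i => sv R₀ i ≠ 0) with hS
  have hcard : (S.card : ℝ) ≤ 2 * T := by
    have := card_sv_support_le_rank R₀
    rw [hS, this]
    exact_mod_cast hrank
  have hPa1 : Pa a R₀ ≤ a * ∑ i ∈ S, sv R₀ i := by
    rw [Pa, Finset.mul_sum]
    rw [← Finset.sum_subset (Finset.subset_univ S)
      (fun i _ hi => by
        have : sv R₀ i = 0 := by
          by_contra h
          exact hi (Finset.mem_filter.mpr ⟨Finset.mem_univ i, h⟩)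
        simp [this])]
    refine Finset.sum_le_sum fun i _ => ?_
    have h1 : (0:ℝ) ≤ a * sv R₀ i := mul_nonneg ha.le (sv_nonneg R₀ i)
    exact div_le_self h1 (by linarith)
  have hsumsq : ∑ i ∈ S, sv R₀ i ^ 2 ≤ ∑ i, ∑ j, (R₀ i j) ^ 2 := by
    rw [← sum_sv_sq]
    exact Finset.sum_le_sum_of_subset_of_nonneg (Finset.subset_univ S)
      (fun i _ _ => sq_nonneg _)
  have hCS : (∑ i ∈ S, sv R₀ i) ≤ Real.sqrt (2 * T) * frobNorm R₀ := by
    have h1 : (∑ i ∈ S, sv R₀ i) ^ 2 ≤ (S.card : ℝ) * ∑ i ∈ S, sv R₀ i ^ 2 :=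
      sq_sum_le_card_mul_sum_sq
    have h2 : (∑ i ∈ S, sv R₀ i) ^ 2 ≤ (2 * T) * ∑ i, ∑ j, (R₀ i j) ^ 2 := by
      calc (∑ i ∈ S, sv R₀ i) ^ 2 ≤ (S.card : ℝ) * ∑ i ∈ S, sv R₀ i ^ 2 := h1
        _ ≤ (2 * T) * ∑ i, ∑ j, (R₀ i j) ^ 2 := by
          apply mul_le_mul hcard hsumsq (Finset.sum_nonneg fun i _ => sq_nonneg _) hTpos.le
    have h3 : (∑ i ∈ S, sv R₀ i) ≤ Real.sqrt ((2 * T) * ∑ i, ∑ j, (R₀ i j) ^ 2) :=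
      (Real.le_sqrt (Finset.sum_nonneg fun i _ => sv_nonneg R₀ i) (by positivity)).mpr h2
    rw [Real.sqrt_mul hTpos.le] at h3
    exact h3
  rw [ge_iff_le, div_le_iff₀ hc]
  calc Pa a R₀ ≤ a * ∑ i ∈ S, sv R₀ i := hPa1
    _ ≤ a * (Real.sqrt (2 * T) * frobNorm R₀) :=
        mul_le_mul_of_nonneg_left hCS ha.le
    _ ≤ a * (Real.sqrt (2 * T) * frobNorm (R₀ + R₁)) := by
        have := mul_le_mul_of_nonneg_left hA hsq.le
        exact mul_le_mul_of_nonneg_left this ha.le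
    _ = frobNorm (R₀ + R₁) * (a * Real.sqrt (2 * T)) := by ring
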